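/- Inadmissibility of axiom R: there is no closed term t with ⊢ t : ι → ◇ι in the calculus SLC, and there is no closed term t with ⊢ t : ι → ◇ι in the calculus JLC; hence the return axiom R is not derivable in SLC or JLC. -/

import Mathlib

/-- Types (shared by SLC and JLC): base, unit, products, functions, ◇. -/
inductive Ty : Type
  | base : Ty
  | unit : Ty
  | prod : Ty → Ty → Ty
  | arr : Ty → Ty → Ty
  | dia : Ty → Ty

/-- Typing contexts (de Bruijn; the head is the most recently bound variable). -/
abbrev Ctx := List Ty

/-- Raw terms of SLC (with the letmap construct). -/
inductive TmS : Type
  | var : ℕ → TmS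
  | unit : TmS
  | pair : TmS → TmS → TmS
  | fst : TmS → TmS
  | snd : TmS → TmS
  | lam : TmS → TmS
  | app : TmS → TmS → TmS
  | letm : TmS → TmS → TmS        -- letmap x = t in u

/-- Raw terms of JLC (with the letmap and letjoin constructs). -/
inductive TmJ : Type
  | var : ℕ → TmJ
  | unit : TmJ
  | pair : TmJ → TmJ → TmJ
  | fst : TmJ → TmJ
  | snd : TmJ → TmJ
  | lam : TmJ → TmJ
  | app : TmJ → TmJ → TmJ
  | letm : TmJ → TmJ → TmJ        -- letmap x = t in u
  | letj : TmJ → TmJ → TmJ        -- letjoin x = t in u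

/-- The typing judgment `Γ ⊢ t : A` of SLC. -/
inductive HasTyS : Ctx → TmS → Ty → Prop
  | var {Γ n A} : Γ[n]? = some A → HasTyS Γ (.var n) A
  | unit {Γ} : HasTyS Γ .unit .unit
  | pair {Γ t u A B} : HasTyS Γ t A → HasTyS Γ u B → HasTyS Γ (.pair t u) (.prod A B)
  | fst {Γ t A B} : HasTyS Γ t (.prod A B) → HasTyS Γ (.fst t) A
  | snd {Γ t A B} : HasTyS Γ t (.prod A B) → HasTyS Γ (.snd t) B
  | lam {Γ t A B} : HasTyS (A :: Γ) t B → HasTyS Γ (.lam t) (.arr A B)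
  | app {Γ t u A B} : HasTyS Γ t (.arr A B) → HasTyS Γ u A → HasTyS Γ (.app t u) B
  | letm {Γ t u A B} : HasTyS Γ t (.dia A) → HasTyS (A :: Γ) u B →
      HasTyS Γ (.letm t u) (.dia B)

/-- The typing judgment `Γ ⊢ t : A` of JLC. -/
inductive HasTyJ : Ctx → TmJ → Ty → Prop
  | var {Γ n A} : Γ[n]? = some A → HasTyJ Γ (.var n) A
  | unit {Γ} : HasTyJ Γ .unit .unit
  | pair {Γ t u A B} : HasTyJ Γ t A → HasTyJ Γ u B → HasTyJ Γ (.pair t u) (.prod A B)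
  | fst {Γ t A B} : HasTyJ Γ t (.prod A B) → HasTyJ Γ (.fst t) A
  | snd {Γ t A B} : HasTyJ Γ t (.prod A B) → HasTyJ Γ (.snd t) B
  | lam {Γ t A B} : HasTyJ (A :: Γ) t B → HasTyJ Γ (.lam t) (.arr A B)
  | app {Γ t u A B} : HasTyJ Γ t (.arr A B) → HasTyJ Γ u A → HasTyJ Γ (.app t u) B
  | letm {Γ t u A B} : HasTyJ Γ t (.dia A) → HasTyJ (A :: Γ) u B →
      HasTyJ Γ (.letm t u) (.dia B)
  | letj {Γ t u A B} : HasTyJ Γ t (.dia A) → HasTyJ (A :: Γ) u (.dia B) →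
      HasTyJ Γ (.letj t u) (.dia B)


/-- Semantic interpretation: ◇ is interpreted as Empty. -/
def TyI : Ty → Prop
  | .base => True
  | .unit => True
  | .prod A B => TyI A ∧ TyI B
  | .arr A B => TyI A → TyI B
  | .dia _ => False

def EnvI : Ctx → Prop
  | [] => True
  | A :: Γ => TyI A ∧ EnvI Γ

def lookupI : ∀ (Γ : Ctx) (n : ℕ) (A : Ty), Γ[n]? = some A → EnvI Γ → TyI A
  | [], _, _, h => by simp at h
  | B :: _, 0, A, h => fun e => by
      simp only [List.getElem?_cons_zero] at h
      injection h with h'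
      exact h' ▸ e.1
  | _ :: Γ, n+1, A, h => fun e => lookupI Γ n A h e.2

theorem soundS {Γ t A} (h : HasTyS Γ t A) : EnvI Γ → TyI A := by
  induction h with
  | var hg => exact lookupI _ _ _ hg
  | unit => exact fun _ => trivial
  | pair _ _ ih1 ih2 => exact fun e => ⟨ih1 e, ih2 e⟩
  | fst _ ih => exact fun e => (ih e).1
  | snd _ ih => exact fun e => (ih e).2
  | lam _ ih => exact fun e a => ih ⟨a, e⟩
  | app _ _ ih1 ih2 => exact fun e => ih1 e (ih2 e)
  | letm _ _ ih1 _ => exact fun e => (ih1 e).elim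

theorem soundJ {Γ t A} (h : HasTyJ Γ t A) : EnvI Γ → TyI A := by
  induction h with
  | var hg => exact lookupI _ _ _ hg
  | unit => exact fun _ => trivial
  | pair _ _ ih1 ih2 => exact fun e => ⟨ih1 e, ih2 e⟩
  | fst _ ih => exact fun e => (ih e).1
  | snd _ ih => exact fun e => (ih e).2
  | lam _ ih => exact fun e a => ih ⟨a, e⟩
  | app _ _ ih1 ih2 => exact fun e => ih1 e (ih2 e)
  | letm _ _ ih1 _ => exact fun e => (ih1 e).elim
  | letj _ _ ih1 _ => exact fun e => (ih1 e).elim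

/-- inadmissibility of axiom R: there is no closed term of type
`ι → ◇ι` in SLC, and none in JLC. -/
theorem return_axiom_inadmissible :
    (¬ ∃ t : TmS, HasTyS [] t (.arr .base (.dia .base))) ∧
    (¬ ∃ t : TmJ, HasTyJ [] t (.arr .base (.dia .base))) := by
  constructor
  · rintro ⟨t, h⟩
    exact soundS h trivial trivial
  · rintro ⟨t, h⟩
    exact soundJ h trivial trivial
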